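/- Tree subspace assignment in the proof of Theorem 11 (alignment sets without cycles): For every integer Δ ≥ 1 and every finite tree T = (V, E) (a finite connected acyclic simple graph) with graph distance d, there exists an assignment of a Δ-dimensional ℂ-linear subspace E_v ⊆ ℂ^{2Δ+1} to each vertex v ∈ V such that: (i) dim(E_u ∩ E_v) ≥ Δ − d(u, v) for all vertices u, v (in particular adjacent vertices' subspaces overlap in at least Δ−1 dimensions); and (ii) for all vertices w, u, v with u and v adjacent or equal, if d(w, u) ≥ Δ and d(w, v) ≥ Δ then E_w ∩ (E_u + E_v) = {0}. -/

import Mathlib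

open Module Submodule

section Helpers
variable {K W : Type*} [Field K] [AddCommGroup W] [Module K W]

lemma avoid_proper [Infinite K] {ι : Type*} [Finite ι] (p : ι → Submodule K W)
    (hp : ∀ i, p i ≠ ⊤) : ∃ x : W, ∀ i, x ∉ p i := by
  by_contra h
  push_neg at h
  have hcov : ⋃ i, ((p i : Set W)) = Set.univ := by
    ext x
    simpa using h x
  obtain ⟨i, hi⟩ := Subspace.exists_eq_top_of_iUnion_eq_univ hcov
  exact hp i hi

lemma inf_sup_span_eq (H F : Submodule K W) (x : W) (hx : x ∉ H ⊔ F) :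
    (H ⊔ K ∙ x) ⊓ F = H ⊓ F := by
  refine le_antisymm ?_ (inf_le_inf_right _ le_sup_left)
  rintro e ⟨he1, he2⟩
  obtain ⟨h, hh, y, hy, rfl⟩ := Submodule.mem_sup.mp he1
  obtain ⟨c, rfl⟩ := Submodule.mem_span_singleton.mp hy
  rcases eq_or_ne c 0 with rfl | hc
  · simpa using ⟨hh, by simpa using he2⟩
  · exfalso
    apply hx
    have : x = c⁻¹ • ((h + c • x) - h) := by
      rw [add_sub_cancel_left, smul_smul, inv_mul_cancel₀ hc, one_smul]
    rw [this]
    exact Submodule.smul_mem _ _ (Submodule.sub_mem _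
      (le_sup_right (α := Submodule K W) he2) (le_sup_left (α := Submodule K W) hh))

lemma finrank_sup_span_singleton [FiniteDimensional K W] (H : Submodule K W) (x : W)
    (hx : x ∉ H) : finrank K ↥(H ⊔ K ∙ x) = finrank K H + 1 := by
  have hx0 : x ≠ 0 := fun h => hx (h ▸ H.zero_mem)
  have hinf : H ⊓ (K ∙ x) = ⊥ := by
    rw [eq_bot_iff]
    rintro e ⟨he1, he2⟩
    obtain ⟨c, rfl⟩ := Submodule.mem_span_singleton.mp he2
    rcases eq_or_ne c 0 with rfl | hc
    · simp
    · exfalso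
      have : x ∈ H := by
        have := H.smul_mem c⁻¹ he1
        rwa [smul_smul, inv_mul_cancel₀ hc, one_smul] at this
      exact hx this
  have := Submodule.finrank_sup_add_finrank_inf_eq H (K ∙ x)
  rw [hinf, finrank_bot, finrank_span_singleton hx0] at this
  omega

lemma finrank_sup_le [FiniteDimensional K W] (A B : Submodule K W) :
    finrank K ↥(A ⊔ B) ≤ finrank K A + finrank K B := by
  have := Submodule.finrank_sup_add_finrank_inf_eq A B
  omega

lemma dualAnnihilator_ne_top {U : Submodule K W} (hU : U ≠ ⊥) :
    U.dualAnnihilator ≠ ⊤ := by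
  obtain ⟨u, hu, hu0⟩ := Submodule.exists_mem_ne_zero_of_ne_bot hU
  have h2 := (Module.forall_dual_apply_eq_zero_iff K u).not.mpr hu0
  push_neg at h2
  obtain ⟨φ, hφ⟩ := h2
  intro htop
  exact hφ ((Submodule.mem_dualAnnihilator φ).mp (htop ▸ Submodule.mem_top) u hu)

end Helpers

section Main

variable {V : Type*} [Fintype V] {G : SimpleGraph V}

/-- The invariant maintained over a set of placed vertices. -/
def GoodOn (Δ : ℕ) (G : SimpleGraph V) (s : Finset V)
    (E : V → Submodule ℂ (Fin (2 * Δ + 1) → ℂ)) : Prop :=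
  (∀ v ∈ s, finrank ℂ (E v) = Δ) ∧
  (∀ u ∈ s, ∀ v ∈ s, G.Adj u v → Δ - 1 ≤ finrank ℂ ↥(E u ⊓ E v)) ∧
  (∀ w ∈ s, ∀ u ∈ s, ∀ v ∈ s, (G.Adj u v ∨ u = v) →
    finrank ℂ ↥(E w ⊓ (E u ⊔ E v)) ≤ Δ - min (G.dist w u) (G.dist w v))

lemma ambient_finrank (Δ : ℕ) : finrank ℂ (Fin (2 * Δ + 1) → ℂ) = 2 * Δ + 1 := by
  simp [Module.finrank_pi]

lemma extend_good [DecidableEq V] (Δ : ℕ) (hΔ : 1 ≤ Δ) (hG : G.Connected)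
    (s : Finset V) (E : V → Submodule ℂ (Fin (2 * Δ + 1) → ℂ))
    (hE : GoodOn Δ G s E) (z p : V) (hz : z ∉ s) (hps : p ∈ s) (hadj : G.Adj p z)
    (huniq : ∀ y ∈ s, G.Adj y z → y = p) :
    ∃ Ez, GoodOn Δ G (insert z s) (Function.update E z Ez) := by
  classical
  obtain ⟨hR, hS, hQ⟩ := hE
  have hWrank := ambient_finrank Δ
  have hEpbot : E p ≠ ⊥ := by
    intro h
    have h2 := hR p hps
    rw [h, finrank_bot] at h2
    omega
  -- Step A : choose a functional φ cutting all relevant intersections with E p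
  obtain ⟨φ, hφ⟩ := avoid_proper
    (fun i : (V × V) ⊕ Unit => match i with
      | .inl (u, v) =>
        if E p ⊓ (E u ⊔ E v) ≠ ⊥ then (E p ⊓ (E u ⊔ E v)).dualAnnihilator
        else (E p).dualAnnihilator
      | .inr _ => (E p).dualAnnihilator)
    (by
      rintro (⟨u, v⟩ | _)
      · dsimp only
        split
        · exact dualAnnihilator_ne_top (by assumption)
        · exact dualAnnihilator_ne_top hEpbot
      · exact dualAnnihilator_ne_top hEpbot)
  have hφp : ∃ e ∈ E p, φ e ≠ 0 := by
    have h := hφ (.inr ())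
    simp only [Submodule.mem_dualAnnihilator] at h
    push_neg at h
    exact h
  have hcut : ∀ u v : V, E p ⊓ (E u ⊔ E v) ≠ ⊥ →
      ∃ e ∈ E p ⊓ (E u ⊔ E v), φ e ≠ 0 := by
    intro u v hne
    have h := hφ (.inl (u, v))
    dsimp only at h
    rw [if_pos hne] at h
    simp only [Submodule.mem_dualAnnihilator] at h
    push_neg at h
    exact h
  set H : Submodule ℂ (Fin (2 * Δ + 1) → ℂ) := E p ⊓ LinearMap.ker φ with hH
  have hHle : H ≤ E p := inf_le_left
  have hHrank : finrank ℂ H = Δ - 1 := by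
    have hker : Submodule.map (E p).subtype (LinearMap.ker (φ.domRestrict (E p))) = H := by
      rw [LinearMap.ker_domRestrict, Submodule.map_comap_subtype]
    have hrange : finrank ℂ (LinearMap.range (φ.domRestrict (E p))) = 1 := by
      obtain ⟨e, he, he0⟩ := hφp
      have hmem : (φ e) ∈ LinearMap.range (φ.domRestrict (E p)) := ⟨⟨e, he⟩, rfl⟩
      have hne : LinearMap.range (φ.domRestrict (E p)) ≠ ⊥ := by
        intro hbot
        rw [hbot] at hmem
        simp only [Submodule.mem_bot] at hmem
        exact he0 hmem
      have h1 : finrank ℂ (LinearMap.range (φ.domRestrict (E p))) ≠ 0 :=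
        fun h0 => hne (Submodule.finrank_eq_zero.mp h0)
      have h2 : finrank ℂ (LinearMap.range (φ.domRestrict (E p))) ≤ 1 := by
        simpa using Submodule.finrank_le (LinearMap.range (φ.domRestrict (E p)))
      omega
    have hrn := LinearMap.finrank_range_add_finrank_ker (φ.domRestrict (E p))
    have hmap := Submodule.finrank_map_subtype_eq (E p) (LinearMap.ker (φ.domRestrict (E p)))
    rw [hker] at hmap
    rw [hrange, hR p hps] at hrn
    omega
  have hcutH : ∀ u v : V, E p ⊓ (E u ⊔ E v) ≠ ⊥ → ¬(E p ⊓ (E u ⊔ E v) ≤ H) := by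
    intro u v hne hle
    obtain ⟨e, he, he0⟩ := hcut u v hne
    exact he0 ((hle he).2)
  -- Step B : choose a fresh generic vector x
  have hFsup : ∀ u ∈ s, ∀ v ∈ s, (G.Adj u v ∨ u = v) →
      finrank ℂ ↥(E u ⊔ E v) ≤ Δ + 1 := by
    intro u hu v hv hor
    rcases hor with hor | rfl
    · have h1 := Submodule.finrank_sup_add_finrank_inf_eq (E u) (E v)
      have h2 := hS u hu v hv hor
      have h3 := hR u hu
      have h4 := hR v hv
      omega
    · rw [sup_idem, hR u hu]
      omega
  have hbotne : (⊥ : Submodule ℂ (Fin (2 * Δ + 1) → ℂ)) ≠ ⊤ := by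
    intro hbt
    have h1 : finrank ℂ (⊥ : Submodule ℂ (Fin (2 * Δ + 1) → ℂ)) = 0 := finrank_bot ℂ _
    rw [hbt, finrank_top, hWrank] at h1
    omega
  obtain ⟨x, hx⟩ := avoid_proper
    (fun i : (V × V) ⊕ V => match i with
      | .inl (u, v) =>
        if u ∈ s ∧ v ∈ s ∧ (G.Adj u v ∨ u = v) then (E u ⊔ E v) ⊔ H else ⊥
      | .inr w => if w ∈ s then E w ⊔ E p else ⊥)
    (by
      rintro (⟨u, v⟩ | w) <;> dsimp only
      · split
        · rename_i hc
          obtain ⟨hu, hv, hor⟩ := hc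
          intro htop
          have hb := finrank_sup_le (E u ⊔ E v) H
          rw [htop] at hb
          rw [finrank_top, hWrank, hHrank] at hb
          have := hFsup u hu v hv hor
          omega
        · exact hbotne
      · split
        · rename_i hw
          intro htop
          have hb := finrank_sup_le (E w) (E p)
          rw [htop] at hb
          rw [finrank_top, hWrank, hR w hw, hR p hps] at hb
          omega
        · exact hbotne)
  have hx1 : ∀ u v : V, u ∈ s → v ∈ s → (G.Adj u v ∨ u = v) →
      x ∉ (E u ⊔ E v) ⊔ H := by
    intro u v hu hv hor
    have h := hx (.inl (u, v))
    dsimp only at h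
    rwa [if_pos ⟨hu, hv, hor⟩] at h
  have hx2 : ∀ w ∈ s, x ∉ E w ⊔ E p := by
    intro w hw
    have h := hx (.inr w)
    dsimp only at h
    rwa [if_pos hw] at h
  have hxp : x ∉ E p := by
    have := hx2 p hps
    rwa [sup_idem] at this
  have hxH : x ∉ H := fun h => hxp (hHle h)
  -- the new subspace
  set Ez := H ⊔ (ℂ ∙ x) with hEzdef
  have hEzrank : finrank ℂ Ez = Δ := by
    rw [hEzdef, finrank_sup_span_singleton H x hxH, hHrank]
    omega
  have hdzp : G.dist z p ≤ 1 := by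
    have h := SimpleGraph.dist_le (SimpleGraph.Walk.cons hadj.symm SimpleGraph.Walk.nil)
    simpa using h
  have hdz : ∀ y : V, G.dist z y ≤ G.dist p y + 1 := by
    intro y
    calc G.dist z y ≤ G.dist z p + G.dist p y := hG.dist_triangle
    _ ≤ G.dist p y + 1 := by omega
  have hdz' : ∀ y : V, G.dist y z ≤ G.dist y p + 1 := by
    intro y
    have h := hdz y
    rw [SimpleGraph.dist_comm (u := z) (v := y), SimpleGraph.dist_comm (u := p) (v := y)] at h
    exact h
  have keyA : ∀ u v : V, u ∈ s → v ∈ s → (G.Adj u v ∨ u = v) →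
      finrank ℂ ↥(Ez ⊓ (E u ⊔ E v)) ≤ Δ - (min (G.dist p u) (G.dist p v) + 1) := by
    intro u v hu hv hor
    have hxuv : x ∉ H ⊔ (E u ⊔ E v) := by
      rw [sup_comm]
      exact hx1 u v hu hv hor
    have h1 : Ez ⊓ (E u ⊔ E v) = H ⊓ (E u ⊔ E v) := inf_sup_span_eq H (E u ⊔ E v) x hxuv
    have h2 : H ⊓ (E u ⊔ E v) = H ⊓ (E p ⊓ (E u ⊔ E v)) := by
      rw [← inf_assoc, inf_eq_left.mpr hHle]
    by_cases hU : E p ⊓ (E u ⊔ E v) = ⊥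
    · rw [h1, h2, hU, inf_bot_eq, finrank_bot]
      exact Nat.zero_le _
    · have hlt : H ⊓ (E p ⊓ (E u ⊔ E v)) < E p ⊓ (E u ⊔ E v) := by
        refine lt_of_le_of_ne inf_le_right ?_
        intro heq
        exact hcutH u v hU (by rw [← heq]; exact inf_le_left)
      have h3 := Submodule.finrank_lt_finrank_of_lt hlt
      have h4 := hQ p hps u hu v hv hor
      rw [h1, h2]
      generalize hm : min (G.dist p u) (G.dist p v) = m at h4 ⊢
      omega
  have hsupZP : Ez ⊔ E p = E p ⊔ (ℂ ∙ x) := by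
    rw [hEzdef, sup_assoc, sup_comm (ℂ ∙ x) (E p), ← sup_assoc, sup_eq_right.mpr hHle]
  have keyB : ∀ w ∈ s, E w ⊓ (Ez ⊔ E p) = E w ⊓ E p := by
    intro w hw
    have hxw : x ∉ E p ⊔ E w := by
      rw [sup_comm]
      exact hx2 w hw
    calc E w ⊓ (Ez ⊔ E p) = (E p ⊔ ℂ ∙ x) ⊓ E w := by rw [hsupZP, inf_comm]
    _ = E p ⊓ E w := inf_sup_span_eq _ _ _ hxw
    _ = E w ⊓ E p := inf_comm _ _
  have hupz : Function.update E z Ez z = Ez := Function.update_self z Ez E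
  have hupy : ∀ y ∈ s, Function.update E z Ez y = E y := fun y hy =>
    Function.update_of_ne (fun h : y = z => hz (h ▸ hy)) Ez E
  refine ⟨Ez, ?_, ?_, ?_⟩
  · -- dimensions
    intro v hv
    rcases Finset.mem_insert.mp hv with hv' | hv
    · rw [hv', hupz]
      exact hEzrank
    · rw [hupy v hv]
      exact hR v hv
  · -- adjacent overlaps
    intro u hu v hv huv
    rcases Finset.mem_insert.mp hu with hu' | hu
    · rcases Finset.mem_insert.mp hv with hv' | hv
      · rw [hu', hv'] at huv
        exact absurd huv G.irrefl
      · rw [hu'] at huv ⊢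
        have hvp : v = p := huniq v hv huv.symm
        rw [hvp, hupz, hupy p hps]
        have hle2 : H ≤ Ez ⊓ E p := le_inf le_sup_left hHle
        have h5 := Submodule.finrank_mono hle2
        rw [hHrank] at h5
        exact h5
    · rcases Finset.mem_insert.mp hv with hv' | hv
      · rw [hv'] at huv ⊢
        have hup : u = p := huniq u hu huv
        rw [hup, hupz, hupy p hps]
        have hle2 : H ≤ E p ⊓ Ez := le_inf hHle le_sup_left
        have h5 := Submodule.finrank_mono hle2
        rw [hHrank] at h5
        exact h5
      · rw [hupy u hu, hupy v hv]
        exact hS u hu v hv huv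
  · -- intersection upper bounds
    intro w hw u hu v hv hor
    rcases Finset.mem_insert.mp hu with hu' | hu
    · rcases Finset.mem_insert.mp hv with hv' | hv
      · -- pair (z, z)
        rw [hu', hv']
        rcases Finset.mem_insert.mp hw with hw' | hw
        · rw [hw', hupz, SimpleGraph.dist_self, min_self]
          have hb : finrank ℂ ↥(Ez ⊓ (Ez ⊔ Ez)) ≤ finrank ℂ Ez :=
            Submodule.finrank_mono inf_le_left
          omega
        · rw [hupy w hw, hupz]
          have h1 := keyA w w hw hw (Or.inr rfl)
          rw [sup_idem] at h1
          have heq : E w ⊓ (Ez ⊔ Ez) = Ez ⊓ E w := by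
            rw [sup_idem]
            exact inf_comm (E w) Ez
          rw [heq]
          have hd := hdz' w
          rw [SimpleGraph.dist_comm (u := w) (v := p),
            SimpleGraph.dist_comm (u := w) (v := z)] at hd
          rw [SimpleGraph.dist_comm (u := w) (v := z), min_self]
          rw [min_self] at h1
          omega
      · -- pair (z, v) with v ∈ s, hence v = p
        rw [hu'] at hor ⊢
        have hor' : G.Adj z v := by
          rcases hor with h | h
          · exact h
          · exact (hz (by rwa [← h] at hv)).elim
        have hvp : v = p := huniq v hv hor'.symm
        rw [hvp]
        rcases Finset.mem_insert.mp hw with hw' | hw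
        · rw [hw', hupz, hupy p hps, SimpleGraph.dist_self]
          have hm0 : min 0 (G.dist z p) = 0 := Nat.zero_min _
          rw [hm0]
          have hb : finrank ℂ ↥(Ez ⊓ (Ez ⊔ E p)) ≤ finrank ℂ Ez :=
            Submodule.finrank_mono inf_le_left
          omega
        · rw [hupy w hw, hupz, hupy p hps, keyB w hw]
          have h2 := hQ w hw p hps p hps (Or.inr rfl)
          rw [sup_idem, min_self] at h2
          have hmin := min_le_right (G.dist w z) (G.dist w p)
          exact le_trans h2 (Nat.sub_le_sub_left hmin Δ)
    · rcases Finset.mem_insert.mp hv with hv' | hv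
      · -- pair (u, z) with u ∈ s, hence u = p
        rw [hv'] at hor ⊢
        have hor' : G.Adj u z := by
          rcases hor with h | h
          · exact h
          · exact (hz (by rwa [h] at hu)).elim
        have hup : u = p := huniq u hu hor'
        rw [hup]
        rcases Finset.mem_insert.mp hw with hw' | hw
        · rw [hw', hupz, hupy p hps, SimpleGraph.dist_self]
          have hm0 : min (G.dist z p) 0 = 0 := Nat.min_zero _
          rw [hm0]
          have hb : finrank ℂ ↥(Ez ⊓ (E p ⊔ Ez)) ≤ finrank ℂ Ez :=
            Submodule.finrank_mono inf_le_left
          omega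
        · rw [hupy w hw, hupy p hps, hupz]
          have h1 : E w ⊓ (E p ⊔ Ez) = E w ⊓ E p := by
            rw [sup_comm (E p) Ez]
            exact keyB w hw
          rw [h1]
          have h2 := hQ w hw p hps p hps (Or.inr rfl)
          rw [sup_idem, min_self] at h2
          have hmin := min_le_left (G.dist w p) (G.dist w z)
          exact le_trans h2 (Nat.sub_le_sub_left hmin Δ)
      · -- pair inside s
        rcases Finset.mem_insert.mp hw with hw' | hw
        · rw [hw', hupz, hupy u hu, hupy v hv]
          have h1 := keyA u v hu hv hor
          have hstep : min (G.dist z u) (G.dist z v) ≤ min (G.dist p u) (G.dist p v) + 1 := by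
            rcases le_total (G.dist p u) (G.dist p v) with h | h
            · rw [min_eq_left h]
              exact le_trans (min_le_left _ _) (by have := hdz u; omega)
            · rw [min_eq_right h]
              exact le_trans (min_le_right _ _) (by have := hdz v; omega)
          exact le_trans h1 (Nat.sub_le_sub_left hstep Δ)
        · rw [hupy w hw, hupy u hu, hupy v hv]
          exact hQ w hw u hu v hv hor

lemma exists_base (Δ : ℕ) (G : SimpleGraph V) (r : V) :
    ∃ E : V → Submodule ℂ (Fin (2 * Δ + 1) → ℂ), GoodOn Δ G {r} E := by
  have hle : Δ ≤ 2 * Δ + 1 := by omega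
  have hli : LinearIndependent ℂ
      (fun i : Fin Δ => (Pi.single (Fin.castLE hle i) (1 : ℂ) : Fin (2 * Δ + 1) → ℂ)) := by
    have h1 := (Pi.basisFun ℂ (Fin (2 * Δ + 1))).linearIndependent
    have h2 := h1.comp (Fin.castLE hle) (Fin.castLE_injective hle)
    have h3 : (⇑(Pi.basisFun ℂ (Fin (2 * Δ + 1))) ∘ Fin.castLE hle) =
        fun i : Fin Δ => (Pi.single (Fin.castLE hle i) (1 : ℂ) : Fin (2 * Δ + 1) → ℂ) := by
      funext i
      simp [Function.comp, Pi.basisFun_apply]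
    rwa [h3] at h2
  set E0 : Submodule ℂ (Fin (2 * Δ + 1) → ℂ) :=
    Submodule.span ℂ (Set.range fun i : Fin Δ =>
      (Pi.single (Fin.castLE hle i) (1 : ℂ) : Fin (2 * Δ + 1) → ℂ)) with hE0
  have hrank : finrank ℂ E0 = Δ := by
    rw [hE0, finrank_span_eq_card hli, Fintype.card_fin]
  refine ⟨fun _ => E0, ?_, ?_, ?_⟩
  · intro v _
    exact hrank
  · intro u hu v hv huv
    rw [Finset.mem_singleton] at hu hv
    subst hu
    subst hv
    exact absurd huv G.irrefl
  · intro w hw u hu v hv _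
    rw [Finset.mem_singleton] at hw hu hv
    subst hw
    subst hu
    subst hv
    rw [SimpleGraph.dist_self, min_self, Nat.sub_zero, sup_idem, inf_idem]
    exact le_of_eq hrank

def ConnOn (G : SimpleGraph V) (s : Finset V) : Prop :=
  ∀ a ∈ s, ∀ b ∈ s, ∃ w : G.Walk a b, ∀ x ∈ w.support, x ∈ s

lemma grow [DecidableEq V] (Δ : ℕ) (hΔ : 1 ≤ Δ) (hG : G.Connected) (hacyc : G.IsAcyclic) :
    ∀ k (s : Finset V), ConnOn G s → s.Nonempty →
      (∃ E, GoodOn Δ G s E) → Fintype.card V ≤ s.card + k →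
      ∃ E, GoodOn Δ G Finset.univ E := by
  intro k
  induction k with
  | zero =>
    intro s _ _ hE hcard
    have hsu : s = Finset.univ :=
      Finset.eq_univ_of_card s (le_antisymm (Finset.card_le_univ s) (by simpa using hcard))
    exact hsu ▸ hE
  | succ k ih =>
    intro s hconnS hne hE hcard
    by_cases hsu : s = Finset.univ
    · exact hsu ▸ hE
    · obtain ⟨b, hb⟩ : ∃ b, b ∉ s := by
        by_contra h
        push_neg at h
        exact hsu (Finset.eq_univ_iff_forall.mpr h)
      obtain ⟨a, ha⟩ := hne
      obtain ⟨wab⟩ := hG a b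
      obtain ⟨d, _, hd1, hd2⟩ := wab.exists_boundary_dart (↑s) (by simpa using ha) (by simpa using hb)
      have hadj : G.Adj d.fst d.snd := d.adj
      have hzs : d.snd ∉ s := by simpa using hd2
      have hps : d.fst ∈ s := by simpa using hd1
      have huniq : ∀ y ∈ s, G.Adj y d.snd → y = d.fst := by
        intro y hy hyz
        by_contra hyp
        obtain ⟨w0, hw0⟩ := hconnS y hy d.fst hps
        have hzsup : d.snd ∉ w0.bypass.support :=
          fun hmem => hzs (hw0 d.snd (w0.support_bypass_subset hmem))
        have hpath2 : (SimpleGraph.Walk.cons hyz.symm w0.bypass).IsPath :=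
          (w0.bypass_isPath).cons hzsup
        have hq := SimpleGraph.isAcyclic_iff_path_unique.mp hacyc
          (SimpleGraph.Path.singleton hadj.symm)
          ⟨SimpleGraph.Walk.cons hyz.symm w0.bypass, hpath2⟩
        have hsup := congrArg (fun q : G.Path d.snd d.fst => q.1.support) hq
        simp only [SimpleGraph.Path.singleton, SimpleGraph.Walk.support_cons,
          SimpleGraph.Walk.support_nil] at hsup
        have hy2 : y ∈ ([d.snd, d.fst] : List V) := by
          rw [hsup]
          exact List.mem_cons_of_mem _ (SimpleGraph.Walk.start_mem_support _)
        simp only [List.mem_cons, List.mem_singleton, List.not_mem_nil, or_false] at hy2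
        rcases hy2 with hy2 | hy2
        · exact hzs (hy2 ▸ hy)
        · exact hyp hy2
      obtain ⟨E, hEg⟩ := hE
      obtain ⟨Ez, hEz⟩ := extend_good Δ hΔ hG s E hEg d.snd d.fst hzs hps hadj huniq
      refine ih (insert d.snd s) ?_ ⟨a, Finset.mem_insert_of_mem ha⟩ ⟨_, hEz⟩ ?_
      · intro a1 ha1 b1 hb1
        rcases Finset.mem_insert.mp ha1 with h1 | h1
        · rcases Finset.mem_insert.mp hb1 with h2 | h2
          · subst h1
            subst h2
            exact ⟨SimpleGraph.Walk.nil, by simp⟩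
          · subst h1
            obtain ⟨w1, hw1⟩ := hconnS d.fst hps b1 h2
            refine ⟨SimpleGraph.Walk.cons hadj.symm w1, ?_⟩
            intro x hx
            rw [SimpleGraph.Walk.support_cons] at hx
            rcases List.mem_cons.mp hx with rfl | hx
            · exact Finset.mem_insert_self _ _
            · exact Finset.mem_insert_of_mem (hw1 x hx)
        · rcases Finset.mem_insert.mp hb1 with h2 | h2
          · subst h2
            obtain ⟨w1, hw1⟩ := hconnS a1 h1 d.fst hps
            refine ⟨w1.append (SimpleGraph.Walk.cons hadj SimpleGraph.Walk.nil), ?_⟩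
            intro x hx
            rw [SimpleGraph.Walk.mem_support_append_iff] at hx
            rcases hx with hx | hx
            · exact Finset.mem_insert_of_mem (hw1 x hx)
            · rw [SimpleGraph.Walk.support_cons] at hx
              rcases List.mem_cons.mp hx with rfl | hx
              · exact Finset.mem_insert_of_mem hps
              · simp only [SimpleGraph.Walk.support_nil, List.mem_singleton] at hx
                subst hx
                exact Finset.mem_insert_self _ _
          · obtain ⟨w1, hw1⟩ := hconnS a1 h1 b1 h2
            exact ⟨w1, fun x hx => Finset.mem_insert_of_mem (hw1 x hx)⟩
      · rw [Finset.card_insert_of_notMem hzs]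
        omega

end Main



/-- **Tree subspace assignment in the proof of Theorem 11** (alignment sets
without cycles). For every `Δ ≥ 1` and every finite tree `G` (connected and
acyclic) with graph distance `d`, one can assign a `Δ`-dimensional subspace
`E v ⊆ ℂ^{2Δ+1}` to each vertex `v` such that:
(i) `dim (E u ⊓ E v) ≥ Δ − d(u, v)` for all `u, v`; and
(ii) whenever `u` and `v` are adjacent or equal and `w` is at distance at
least `Δ` from both, `E w ⊓ (E u ⊔ E v) = ⊥`. -/
theorem tim_tree_subspace_assignment
    (Δ : ℕ) (hΔ : 1 ≤ Δ) {V : Type*} [Fintype V]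
    (G : SimpleGraph V) (hconn : G.Connected) (hacyc : G.IsAcyclic) :
    ∃ E : V → Submodule ℂ (Fin (2 * Δ + 1) → ℂ),
      (∀ v : V, Module.finrank ℂ (E v) = Δ) ∧
      -- (i)
      (∀ u v : V, Δ - G.dist u v ≤ Module.finrank ℂ ↥(E u ⊓ E v)) ∧
      -- (ii)
      (∀ w u v : V, (G.Adj u v ∨ u = v) →
        Δ ≤ G.dist w u → Δ ≤ G.dist w v →
        E w ⊓ (E u ⊔ E v) = ⊥) := by
  classical
  obtain ⟨r⟩ : Nonempty V := hconn.nonempty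
  obtain ⟨E0, hE0⟩ := exists_base Δ G r
  have hconn1 : ConnOn G {r} := by
    intro a ha b hb
    rw [Finset.mem_singleton] at ha hb
    subst ha
    subst hb
    exact ⟨SimpleGraph.Walk.nil, by simp⟩
  obtain ⟨E, hE⟩ := grow Δ hΔ hconn hacyc (Fintype.card V) {r} hconn1
    ⟨r, Finset.mem_singleton_self r⟩ ⟨E0, hE0⟩ (by simp)
  obtain ⟨hR, hS, hQ⟩ := hE
  refine ⟨E, fun v => hR v (Finset.mem_univ v), ?_, ?_⟩
  · -- (i)
    have key : ∀ n u v, G.dist u v ≤ n → Δ - n ≤ finrank ℂ ↥(E u ⊓ E v) := by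
      intro n
      induction n with
      | zero =>
        intro u v hd
        have huv : u = v := (hconn.dist_eq_zero_iff).mp (Nat.le_zero.mp hd)
        subst huv
        rw [inf_idem, Nat.sub_zero, hR u (Finset.mem_univ u)]
      | succ n ih =>
        intro u v hd
        rcases Nat.lt_or_ge (G.dist u v) (n + 1) with h | h
        · have := ih u v (by omega)
          omega
        · have hdeq : G.dist u v = n + 1 := le_antisymm hd h
          obtain ⟨w, hw⟩ := hconn.exists_walk_length_eq_dist u v
          cases w with
          | nil =>
            rw [hdeq] at hw
            simp at hw
          | @cons _ m _ hadjm q =>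
            rw [SimpleGraph.Walk.length_cons, hdeq] at hw
            have hd2 : G.dist m v ≤ n := by
              have := SimpleGraph.dist_le q
              omega
            have hb := ih m v hd2
            have ha := hS u (Finset.mem_univ u) m (Finset.mem_univ m) hadjm
            have hsub : (E u ⊓ E m) ⊔ (E m ⊓ E v) ≤ E m := sup_le inf_le_right inf_le_left
            have h1 := Submodule.finrank_sup_add_finrank_inf_eq (E u ⊓ E m) (E m ⊓ E v)
            have h2 : finrank ℂ ↥((E u ⊓ E m) ⊔ (E m ⊓ E v)) ≤ Δ := by
              have hmono := Submodule.finrank_mono hsub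
              rwa [hR m (Finset.mem_univ m)] at hmono
            have h3 : (E u ⊓ E m) ⊓ (E m ⊓ E v) ≤ E u ⊓ E v :=
              le_inf (le_trans inf_le_left inf_le_left) (le_trans inf_le_right inf_le_right)
            have h4 := Submodule.finrank_mono h3
            omega
    intro u v
    exact key (G.dist u v) u v le_rfl
  · -- (ii)
    intro w u v hor h1 h2
    have h3 := hQ w (Finset.mem_univ w) u (Finset.mem_univ u) v (Finset.mem_univ v) hor
    have hmin : Δ ≤ min (G.dist w u) (G.dist w v) := le_min h1 h2
    have hzero : Δ - min (G.dist w u) (G.dist w v) = 0 := Nat.sub_eq_zero_of_le hmin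
    have h0 : finrank ℂ ↥(E w ⊓ (E u ⊔ E v)) = 0 := by
      rw [hzero] at h3
      omega
    exact Submodule.finrank_eq_zero.mp h0
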